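/- Let A ∈ ℝ^{n×n}, T > 0, B₀ ∈ ℝ^{n×m₀} a (possibly zero) existing input matrix, C ∈ ℝ^{p×n}, and let V = {b_1, …, b_M} be a finite set of vectors in ℝ^n (possible input matrix columns). For S ⊆ V define the finite-horizon controllability Gramian W_S = ∫_0^T e^{Aτ} (B₀B₀ᵀ + Σ_{s∈S} b_s b_sᵀ) e^{Aᵀτ} dτ. Then the set function f : 2^V → ℝ defined by f(S) = tr(C W_S Cᵀ) is modular: for all subsets S ⊆ V, f(S) = f(∅) + Σ_{s∈S} tr(C W̃_s Cᵀ), where W̃_s = ∫_0^T e^{Aτ} b_s b_sᵀ e^{Aᵀτ} dτ, and consequently f(A') + f(B') = f(A' ∪ B') + f(A' ∩ B') for all A', B' ⊆ V. -/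

import Mathlib

open Matrix


private lemma exp_entry_cont {n : ℕ} (A Mx : Matrix (Fin n) (Fin n) ℝ) (i j : Fin n) :
    Continuous fun τ : ℝ =>
      (NormedSpace.exp (τ • A) * Mx * NormedSpace.exp (τ • Aᵀ)) i j := by
  letI : SeminormedRing (Matrix (Fin n) (Fin n) ℝ) := Matrix.linftyOpSemiNormedRing
  letI : NormedRing (Matrix (Fin n) (Fin n) ℝ) := Matrix.linftyOpNormedRing
  letI : NormedAlgebra ℝ (Matrix (Fin n) (Fin n) ℝ) := Matrix.linftyOpNormedAlgebra
  letI : NormedAlgebra ℚ (Matrix (Fin n) (Fin n) ℝ) := NormedAlgebra.restrictScalars ℚ ℝ _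
  have h1 : Continuous fun τ : ℝ => NormedSpace.exp (τ • A) :=
    NormedSpace.exp_continuous.comp (continuous_id.smul continuous_const)
  have h2 : Continuous fun τ : ℝ => NormedSpace.exp (τ • Aᵀ) :=
    NormedSpace.exp_continuous.comp (continuous_id.smul continuous_const)
  exact ((h1.matrix_mul continuous_const).matrix_mul h2).matrix_elem i j

/-- The weighted trace of the finite-horizon controllability Gramian is a modular set
function of the chosen set of input-matrix columns:
`f(S) = f(∅) + ∑_{s ∈ S} tr(C W̃_s Cᵀ)`, and hence
`f(A') + f(B') = f(A' ∪ B') + f(A' ∩ B')`. -/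
theorem trace_gramian_modular
    {n m₀ p M : ℕ}
    (A : Matrix (Fin n) (Fin n) ℝ) (T : ℝ) (hT : 0 < T)
    (B₀ : Matrix (Fin n) (Fin m₀) ℝ) (C : Matrix (Fin p) (Fin n) ℝ)
    (b : Fin M → (Fin n → ℝ))
    -- W S is the finite-horizon controllability Gramian for input matrix [B₀, b_s (s ∈ S)]:
    (W : Finset (Fin M) → Matrix (Fin n) (Fin n) ℝ)
    (hW : ∀ (S : Finset (Fin M)) (i j : Fin n),
      W S i j = ∫ τ in (0:ℝ)..T,
        (NormedSpace.exp (τ • A) *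
          (B₀ * B₀ᵀ + ∑ s ∈ S, vecMulVec (b s) (b s)) *
          NormedSpace.exp (τ • Aᵀ)) i j)
    -- W̃ s is the Gramian associated with the single column b_s:
    (Wtil : Fin M → Matrix (Fin n) (Fin n) ℝ)
    (hWtil : ∀ (s : Fin M) (i j : Fin n),
      Wtil s i j = ∫ τ in (0:ℝ)..T,
        (NormedSpace.exp (τ • A) * vecMulVec (b s) (b s) *
          NormedSpace.exp (τ • Aᵀ)) i j) :
    (∀ S : Finset (Fin M),
       (C * W S * Cᵀ).trace = (C * W ∅ * Cᵀ).trace + ∑ s ∈ S, (C * Wtil s * Cᵀ).trace) ∧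
    (∀ A' B' : Finset (Fin M),
       (C * W A' * Cᵀ).trace + (C * W B' * Cᵀ).trace =
       (C * W (A' ∪ B') * Cᵀ).trace + (C * W (A' ∩ B') * Cᵀ).trace) := by
  have hco : ∀ (Mx : Matrix (Fin n) (Fin n) ℝ) (i j : Fin n),
      Continuous fun τ : ℝ =>
        (NormedSpace.exp (τ • A) * Mx * NormedSpace.exp (τ • Aᵀ)) i j :=
    fun Mx i j => exp_entry_cont A Mx i j
  have hI : ∀ (Mx : Matrix (Fin n) (Fin n) ℝ) (i j : Fin n),
      IntervalIntegrable (fun τ : ℝ =>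
        (NormedSpace.exp (τ • A) * Mx * NormedSpace.exp (τ • Aᵀ)) i j)
        MeasureTheory.volume 0 T := fun Mx i j => (hco Mx i j).intervalIntegrable _ _
  have hWeq : ∀ S : Finset (Fin M), W S = W ∅ + ∑ s ∈ S, Wtil s := by
    intro S
    ext i j
    rw [Matrix.add_apply, Matrix.sum_apply, hW, hW ∅]
    simp only [Finset.sum_empty, add_zero]
    have hcong : (fun τ : ℝ =>
        (NormedSpace.exp (τ • A) *
          (B₀ * B₀ᵀ + ∑ s ∈ S, vecMulVec (b s) (b s)) *
          NormedSpace.exp (τ • Aᵀ)) i j)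
        = fun τ : ℝ =>
          (NormedSpace.exp (τ • A) * (B₀ * B₀ᵀ) * NormedSpace.exp (τ • Aᵀ)) i j
          + ∑ s ∈ S,
            (NormedSpace.exp (τ • A) * vecMulVec (b s) (b s) *
              NormedSpace.exp (τ • Aᵀ)) i j := by
      funext τ
      simp [Matrix.mul_add, Matrix.add_mul, Finset.mul_sum, Finset.sum_mul,
        Matrix.add_apply, Matrix.sum_apply]
    rw [hcong]
    have hsum : IntervalIntegrable
        (fun τ : ℝ => ∑ s ∈ S, (NormedSpace.exp (τ • A) * vecMulVec (b s) (b s) *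
          NormedSpace.exp (τ • Aᵀ)) i j) MeasureTheory.volume 0 T :=
      (continuous_finset_sum S fun s _ => hco (vecMulVec (b s) (b s)) i j).intervalIntegrable _ _
    rw [intervalIntegral.integral_add (hI _ i j) hsum,
      intervalIntegral.integral_finset_sum (fun s _ => hI (vecMulVec (b s) (b s)) i j)]
    congr 1
    exact Finset.sum_congr rfl fun s _ => (hWtil s i j).symm
  have part1 : ∀ S : Finset (Fin M),
      (C * W S * Cᵀ).trace = (C * W ∅ * Cᵀ).trace + ∑ s ∈ S, (C * Wtil s * Cᵀ).trace := by
    intro S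
    rw [hWeq S]
    simp [Matrix.mul_add, Matrix.add_mul, Matrix.mul_sum, Matrix.sum_mul,
      Matrix.trace_add, Matrix.trace_sum]
  refine ⟨part1, fun A' B' => ?_⟩
  rw [part1 A', part1 B', part1 (A' ∪ B'), part1 (A' ∩ B')]
  have h := Finset.sum_union_inter (s₁ := A') (s₂ := B')
    (f := fun s => (C * Wtil s * Cᵀ).trace)
  linarith
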